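/- Let Φ : C → C⁴ be the curve Φ(t) = (t, αt, t, βt) with α ≠ β fixed complex numbers, and consider the 4 × 6 matrix D(t) = [[t, 0, αt, 0, 0, 0], [αt, t, 0, 0, 0, 0], [t, 0, βt, (α−β)t², 0, β(α−β)t²], [βt, t, 0, β(α−β)t², (α−β)t², 0]] and the vector v(t) = (t, 3αt, t, 3βt). Then v(t) does not lie in the C[[t]]-module generated by the columns of D(t); i.e., there are no power series c₁(t),...,c₆(t) with v = D·c. -/

import Mathlib

open PowerSeries

private lemma L1 (f : PowerSeries ℂ) : coeff 1 (X * f) = coeff 0 f :=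
  coeff_succ_X_mul 0 f

private lemma L2 (γ : ℂ) (f : PowerSeries ℂ) :
    coeff 1 (C γ * X * f) = γ * coeff 0 f := by
  rw [mul_assoc, coeff_C_mul, L1]

private lemma L3 (g f : PowerSeries ℂ) : coeff 1 (g * X ^ 2 * f) = 0 := by
  rw [show g * X ^ 2 * f = X * (X * (g * f)) by ring, L1]
  simp [coeff_zero_eq_constantCoeff]



/-- for `α ≠ β`, the vector `v(t) = (t, 3αt, t, 3βt)` does not lie in the
`ℂ[[t]]`-module generated by the columns of the pulled-back doubled matrix `D(t)`. -/
theorem stmt17 (α β : ℂ) (hαβ : α ≠ β) (a b t : PowerSeries ℂ)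
    (ha : a = PowerSeries.C α) (hb : b = PowerSeries.C β)
    (ht : t = PowerSeries.X) :
    ¬ ∃ c : Fin 6 → PowerSeries ℂ,
      (!![t, 0, a * t, 0, 0, 0;
          a * t, t, 0, 0, 0, 0;
          t, 0, b * t, (a - b) * t ^ 2, 0, b * (a - b) * t ^ 2;
          b * t, t, 0, b * (a - b) * t ^ 2, (a - b) * t ^ 2, 0]).mulVec c =
        ![t, 3 * a * t, t, 3 * b * t] := by
  subst ha hb ht
  rintro ⟨c, hc⟩
  have e0 := congrFun hc 0
  have e1 := congrFun hc 1
  have e2 := congrFun hc 2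
  have e3 := congrFun hc 3
  simp [Matrix.mulVec, dotProduct, Fin.sum_univ_six] at e0 e1 e2 e3
  rw [show (3 : ℂ⟦X⟧) * C α * X = C (3 * α) * X by
    rw [show (3:ℂ⟦X⟧) = C 3 from (map_ofNat _ 3).symm, ← map_mul]] at e1
  rw [show (3 : ℂ⟦X⟧) * C β * X = C (3 * β) * X by
    rw [show (3:ℂ⟦X⟧) = C 3 from (map_ofNat _ 3).symm, ← map_mul]] at e3
  rw [show C β * (C α - C β) * X ^ 2 * c 3
      = (C β * (C α - C β)) * X ^ 2 * c 3 by ring] at e3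
  have E0 := congrArg (coeff 1) e0
  have E1 := congrArg (coeff 1) e1
  have E2 := congrArg (coeff 1) e2
  have E3 := congrArg (coeff 1) e3
  simp only [map_add, L1, L2, L3, coeff_C_mul, coeff_one_X, mul_one, add_zero] at E0 E1 E2 E3
  set x := coeff 0 (c 0)
  set y := coeff 0 (c 1)
  set z := coeff 0 (c 2)
  have hz : z = 0 := by
    have h := sub_ne_zero.mpr hαβ
    have : (α - β) * z = 0 := by linear_combination E0 - E2
    exact (mul_eq_zero.mp this).resolve_left h
  have hx3 : x = 3 := by
    have h := sub_ne_zero.mpr hαβ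
    have : (α - β) * (x - 3) = 0 := by linear_combination E1 - E3
    have h3 := (mul_eq_zero.mp this).resolve_left h
    exact sub_eq_zero.mp h3
  rw [hz, hx3] at E0
  norm_num at E0
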